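/- Let M be a lattice of rank n and σ∨ ⊂ M ⊗ ℝ a full-dimensional strictly convex rational polyhedral cone whose primitive ray generators u₁,…,u_n are linearly independent (simplicial case) but do not form part of a basis normalization making the cone regular, i.e., {u₁,…,u_n} is not a ℤ-basis of M. Then there exists a lattice point p in the interior of σ∨ with λ_max(p) ≤ n − 1. -/

import Mathlib

open Finset

noncomputable section

/-- The convex polyhedral cone generated by the vectors `u i`. -/
def coneOf {n : ℕ} {ι : Type*} [Fintype ι] (u : ι → (Fin n → ℝ)) : Set (Fin n → ℝ) :=
  {x | ∃ a : ι → ℝ, (∀ i, 0 ≤ a i) ∧ x = ∑ i, a i • u i}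

/-- The set of coefficient sums of nonnegative representations of `x` in terms of `u`. -/
def reprSums {n : ℕ} {ι : Type*} [Fintype ι] (u : ι → (Fin n → ℝ)) (x : Fin n → ℝ) :
    Set ℝ :=
  {t | ∃ a : ι → ℝ, (∀ i, 0 ≤ a i) ∧ x = ∑ i, a i • u i ∧ t = ∑ i, a i}

/-- `λ_min`: the minimal coefficient sum of a nonnegative representation. -/
noncomputable def lamMin {n : ℕ} {ι : Type*} [Fintype ι] (u : ι → (Fin n → ℝ))
    (x : Fin n → ℝ) : ℝ :=
  sInf (reprSums u x)

/-- `λ_max`: the maximal coefficient sum of a nonnegative representation. -/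
noncomputable def lamMax {n : ℕ} {ι : Type*} [Fintype ι] (u : ι → (Fin n → ℝ))
    (x : Fin n → ℝ) : ℝ :=
  sSup (reprSums u x)

/-- A lattice point: all coordinates are integers. -/
def IsLatticePt {n : ℕ} (x : Fin n → ℝ) : Prop := ∀ j, ∃ z : ℤ, x j = (z : ℝ)

/-- A primitive lattice vector: the smallest nonzero lattice point on its ray. -/
def IsPrimitive {n : ℕ} (x : Fin n → ℝ) : Prop :=
  IsLatticePt x ∧ x ≠ 0 ∧ ∀ c : ℝ, 0 < c → IsLatticePt (c • x) → 1 ≤ c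

/-- Strict convexity (pointedness) of the cone generated by `u`. -/
def PointedGens {n : ℕ} {ι : Type*} [Fintype ι] (u : ι → (Fin n → ℝ)) : Prop :=
  ∀ x, x ∈ coneOf u → -x ∈ coneOf u → x = 0

/-- Full-dimensionality of the cone generated by `u`. -/
def FullDim {n : ℕ} {ι : Type*} [Fintype ι] (u : ι → (Fin n → ℝ)) : Prop :=
  Submodule.span ℝ (Set.range u) = ⊤

/-- Each `u i` spans an extremal ray: it is not in the cone generated by the others. -/
def ExtremalGens {n : ℕ} {ι : Type*} [Fintype ι] [DecidableEq ι]
    (u : ι → (Fin n → ℝ)) : Prop :=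
  ∀ i, u i ∉ coneOf (fun j : {j : ι // j ≠ i} => u j.1)

/-- The standard pairing between `M ⊗ ℝ` and `N ⊗ ℝ`. -/
def pairing {n : ℕ} (x v : Fin n → ℝ) : ℝ := ∑ j, x j * v j

section Aux
variable {n : ℕ}

lemma latticePt_sub {x y : Fin n → ℝ} (hx : IsLatticePt x) (hy : IsLatticePt y) :
    IsLatticePt (x - y) := by
  intro j
  obtain ⟨a, ha⟩ := hx j; obtain ⟨b, hb⟩ := hy j
  exact ⟨a - b, by simp [Pi.sub_apply, ha, hb]⟩

lemma latticePt_add {x y : Fin n → ℝ} (hx : IsLatticePt x) (hy : IsLatticePt y) :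
    IsLatticePt (x + y) := by
  intro j
  obtain ⟨a, ha⟩ := hx j; obtain ⟨b, hb⟩ := hy j
  exact ⟨a + b, by simp [Pi.add_apply, ha, hb]⟩

lemma latticePt_intComb {ι : Type*} [Fintype ι] (z : ι → ℤ) (v : ι → Fin n → ℝ)
    (hv : ∀ i, IsLatticePt (v i)) : IsLatticePt (∑ i, (z i : ℝ) • v i) := by
  intro j
  choose w hw using fun i => hv i j
  refine ⟨∑ i, z i * w i, ?_⟩
  have h : (∑ i, (z i : ℝ) • v i) j = ∑ i, (z i : ℝ) * v i j := by
    simp [Finset.sum_apply]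
  rw [h]
  push_cast
  exact Finset.sum_congr rfl fun i _ => by rw [hw i]

variable {u : Fin n → Fin n → ℝ}

lemma coeff_unique (hli : LinearIndependent ℝ u) {a b : Fin n → ℝ}
    (h : ∑ i, a i • u i = ∑ i, b i • u i) : a = b := by
  have h0 : ∑ i, (a i - b i) • u i = 0 := by
    simp only [sub_smul, Finset.sum_sub_distrib, h, sub_self]
  have h1 := Fintype.linearIndependent_iff.mp hli (fun i => a i - b i) h0
  funext i
  have h2 : a i - b i = 0 := h1 i
  linarith

lemma lamMax_sum (hli : LinearIndependent ℝ u) (a : Fin n → ℝ) (ha : ∀ i, 0 ≤ a i) :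
    lamMax u (∑ i, a i • u i) = ∑ i, a i := by
  have hre : reprSums u (∑ i, a i • u i) = {∑ i, a i} := by
    ext t
    constructor
    · rintro ⟨b, hb0, heq, rfl⟩
      have hab : a = b := coeff_unique hli heq
      simp [hab]
    · rintro rfl
      exact ⟨a, ha, rfl, rfl⟩
  rw [lamMax, hre, csSup_singleton]

lemma mem_interior_cone (hli : LinearIndependent ℝ u) (hfd : FullDim u)
    (a : Fin n → ℝ) (ha : ∀ i, 0 < a i) : (∑ i, a i • u i) ∈ interior (coneOf u) := by
  set B : Module.Basis (Fin n) ℝ (Fin n → ℝ) := Module.Basis.mk hli (le_of_eq hfd.symm) with hBdef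
  have hBu : ∀ i, B i = u i := fun i => by rw [hBdef, Module.Basis.mk_apply]
  have hcont : Continuous fun x => B.equivFun x :=
    (B.equivFun : (Fin n → ℝ) →ₗ[ℝ] (Fin n → ℝ)).continuous_of_finiteDimensional
  set U : Set (Fin n → ℝ) := {x | ∀ i, 0 < B.equivFun x i} with hUdef
  have hUopen : IsOpen U := by
    have hU : U = ⋂ i, {x | 0 < B.equivFun x i} := by
      ext x; simp [hUdef, Set.mem_iInter]
    rw [hU]
    exact isOpen_iInter_of_finite fun i =>
      isOpen_lt continuous_const ((continuous_apply i).comp hcont)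
  have hUsub : U ⊆ coneOf u := by
    intro x hx
    refine ⟨fun i => B.equivFun x i, fun i => (hx i).le, ?_⟩
    conv_lhs => rw [← B.sum_equivFun x]
    exact Finset.sum_congr rfl fun i _ => by rw [hBu]
  have hmem : (∑ i, a i • u i) ∈ U := by
    have h1 : (∑ j, a j • u j) = B.equivFun.symm a := by
      rw [Module.Basis.equivFun_symm_apply]
      exact Finset.sum_congr rfl fun j _ => by rw [hBu]
    intro i
    rw [h1, LinearEquiv.apply_symm_apply]
    exact ha i
  exact interior_maximal hUsub hUopen hmem

end Aux

/-- a simplicial cone whose linearly independent primitive ray generators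
are not a ℤ-basis of the lattice has an interior lattice point p with λ_max(p) ≤ n − 1. -/
theorem exists_interior_lattice_lamMax_le {n : ℕ} (u : Fin n → (Fin n → ℝ))
    (hli : LinearIndependent ℝ u) (hprim : ∀ i, IsPrimitive (u i))
    (hpt : PointedGens u) (hfd : FullDim u)
    (hnb : ¬ ∀ x : Fin n → ℝ, IsLatticePt x → ∃ z : Fin n → ℤ,
      x = ∑ i, (z i : ℝ) • u i) :
    ∃ p : Fin n → ℝ, IsLatticePt p ∧ p ∈ interior (coneOf u) ∧
      lamMax u p ≤ (n : ℝ) - 1 := by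
  classical
  push_neg at hnb
  obtain ⟨x, hxlat, hxz⟩ := hnb
  have hulat : ∀ i, IsLatticePt (u i) := fun i => (hprim i).1
  -- coordinates of x in the basis u
  set B : Module.Basis (Fin n) ℝ (Fin n → ℝ) := Module.Basis.mk hli (le_of_eq hfd.symm) with hBdef
  have hBu : ∀ i, B i = u i := fun i => by rw [hBdef, Module.Basis.mk_apply]
  set a : Fin n → ℝ := B.equivFun x with hadef
  have hx_eq : x = ∑ i, a i • u i := by
    conv_lhs => rw [← B.sum_equivFun x]
    exact Finset.sum_congr rfl fun i _ => by rw [hBu]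
  set f : Fin n → ℝ := fun i => Int.fract (a i) with hfdef
  have hf0 : ∀ i, 0 ≤ f i := fun i => Int.fract_nonneg _
  have hf1 : ∀ i, f i < 1 := fun i => Int.fract_lt_one _
  -- q = fractional part combination, a lattice point
  have hq_eq : (∑ i, f i • u i) = x - ∑ i, ((⌊a i⌋ : ℤ) : ℝ) • u i := by
    rw [hx_eq, ← Finset.sum_sub_distrib]
    refine Finset.sum_congr rfl fun i _ => ?_
    rw [← sub_smul]
    have hfi : f i = a i - ⌊a i⌋ := rfl
    rw [hfi]
  have hqlat : IsLatticePt (∑ i, f i • u i) := by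
    rw [hq_eq]
    exact latticePt_sub hxlat (latticePt_intComb (fun i => ⌊a i⌋) u hulat)
  -- f ≠ 0
  have hf_ne : ∃ i, f i ≠ 0 := by
    by_contra h
    push_neg at h
    apply hxz (fun i => ⌊a i⌋)
    rw [hx_eq]
    refine Finset.sum_congr rfl fun i _ => ?_
    congr 1
    have h2 : a i - ⌊a i⌋ = 0 := h i
    linarith
  set T : Finset (Fin n) := univ.filter (fun i => f i ≠ 0) with hTdef
  have hTne : T.Nonempty := by
    obtain ⟨i, hi⟩ := hf_ne
    exact ⟨i, by simp [hTdef, hi]⟩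
  have hT2 : 2 ≤ T.card := by
    have hT0 : T.card ≠ 0 := by
      simpa [Finset.card_eq_zero, ← Finset.nonempty_iff_ne_empty] using hTne
    have hT1 : T.card ≠ 1 := by
      intro hc
      obtain ⟨i₀, hi₀⟩ := Finset.card_eq_one.mp hc
      have hfz : ∀ j, j ≠ i₀ → f j = 0 := by
        intro j hj
        by_contra hfj
        have : j ∈ T := by simp [hTdef, hfj]
        rw [hi₀] at this
        exact hj (Finset.mem_singleton.mp this)
      have hi₀T : i₀ ∈ T := by rw [hi₀]; exact Finset.mem_singleton_self _
      have hfi₀ : f i₀ ≠ 0 := by simpa [hTdef] using hi₀T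
      have hq2 : (∑ i, f i • u i) = f i₀ • u i₀ := by
        rw [Finset.sum_eq_single i₀]
        · intro b _ hb; rw [hfz b hb, zero_smul]
        · intro h; exact absurd (Finset.mem_univ i₀) h
      have := (hprim i₀).2.2 (f i₀) (lt_of_le_of_ne (hf0 i₀) (Ne.symm hfi₀))
        (by rw [← hq2]; exact hqlat)
      linarith [hf1 i₀]
    omega
  set s : ℝ := ∑ i, f i with hsdef
  have hn2 : (2 : ℝ) ≤ n := by
    have : T.card ≤ n := by
      have h := Finset.card_le_univ T
      rwa [Fintype.card_fin] at h
    have h2 : (2 : ℝ) ≤ (T.card : ℝ) := by exact_mod_cast hT2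
    have h3 : (T.card : ℝ) ≤ n := by exact_mod_cast this
    linarith
  rcases le_or_gt 1 s with hs | hs
  · -- p = ∑ (1 - f i) • u i
    refine ⟨∑ i, (1 - f i) • u i, ?_, ?_, ?_⟩
    · have hp_eq : (∑ i, (1 - f i) • u i)
          = (∑ i, (((1 : ℤ) : ℝ)) • u i) - ∑ i, f i • u i := by
        rw [← Finset.sum_sub_distrib]
        refine Finset.sum_congr rfl fun i _ => ?_
        rw [← sub_smul]; norm_num
      rw [hp_eq]
      exact latticePt_sub (latticePt_intComb 1 u hulat) hqlat
    · exact mem_interior_cone hli hfd _ (fun i => by linarith [hf1 i])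
    · rw [lamMax_sum hli _ (fun i => by linarith [hf1 i])]
      rw [Finset.sum_sub_distrib]
      simp only [Finset.sum_const, Finset.card_univ, Fintype.card_fin, nsmul_eq_mul, mul_one]
      linarith
  · -- p = ∑ g i • u i, g i = f i + (if f i = 0 then 1 else 0)
    set g : Fin n → ℝ := fun i => f i + (if f i = 0 then 1 else 0) with hgdef
    have hg0 : ∀ i, 0 < g i := by
      intro i
      have hgi : g i = f i + (if f i = 0 then 1 else 0) := rfl
      rw [hgi]
      rcases eq_or_ne (f i) 0 with h | h
      · rw [h, if_pos rfl]; norm_num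
      · rw [if_neg h, add_zero]
        exact lt_of_le_of_ne (hf0 i) (Ne.symm h)
    refine ⟨∑ i, g i • u i, ?_, ?_, ?_⟩
    · have hp_eq : (∑ i, g i • u i)
          = (∑ i, f i • u i) + ∑ i, (((if f i = 0 then (1:ℤ) else 0) : ℤ) : ℝ) • u i := by
        rw [← Finset.sum_add_distrib]
        refine Finset.sum_congr rfl fun i _ => ?_
        rw [← add_smul]
        congr 1
        rcases eq_or_ne (f i) 0 with h | h <;> simp [hgdef, h]
      rw [hp_eq]
      exact latticePt_add hqlat (latticePt_intComb _ u hulat)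
    · exact mem_interior_cone hli hfd _ hg0
    · rw [lamMax_sum hli _ (fun i => (hg0 i).le)]
      have hsum : ∑ i, g i = s + ((univ.filter (fun i => f i = 0)).card : ℝ) := by
        rw [hgdef]
        rw [Finset.sum_add_distrib, ← hsdef]
        congr 1
        rw [Finset.sum_boole]
      have hcards : (univ.filter (fun i => f i = 0)).card + T.card = n := by
        rw [hTdef]
        simpa using Finset.card_filter_add_card_filter_not
          (s := (univ : Finset (Fin n))) (p := fun i => f i = 0)
      have hc : ((univ.filter (fun i => f i = 0)).card : ℝ) = (n : ℝ) - T.card := by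
        have := hcards
        push_cast [← this]
        ring
      rw [hsum, hc]
      have h2 : (2 : ℝ) ≤ (T.card : ℝ) := by exact_mod_cast hT2
      linarith
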